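/- Let F be a free group and let a and b be primitive elements of F. If there exist nonzero integers n, m and g ∈ F such that a^m g b^n g^{-1} = 1, then a is conjugate to b or a is conjugate to b^{-1}. -/

import Mathlib

/-- An element of a free group is *primitive* if it belongs to some free basis,
equivalently if it is the image of a generator under an automorphism. -/
def IsPrimitiveElt {α : Type*} (a : FreeGroup α) : Prop :=
  ∃ (e : FreeGroup α ≃* FreeGroup α) (i : α), e (FreeGroup.of i) = a

section Aux

open scoped Classical

open Subgroup

/-- In a free group over a subsingleton type, everything is a power of one element. -/
lemma freeGroup_subsingleton_cyclic {β : Type*} [Subsingleton β] :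
    ∃ z : FreeGroup β, ∀ x : FreeGroup β, x ∈ Subgroup.zpowers z := by
  by_cases hβ : Nonempty β
  · obtain ⟨i⟩ := hβ
    refine ⟨FreeGroup.of i, fun x => ?_⟩
    induction x using FreeGroup.induction_on with
    | C1 => exact one_mem _
    | of j => rw [Subsingleton.elim j i]; exact Subgroup.mem_zpowers _
    | inv_of j hj => exact inv_mem hj
    | mul x y hx hy => exact mul_mem hx hy
  · refine ⟨1, fun x => ?_⟩
    induction x using FreeGroup.induction_on with
    | C1 => exact one_mem _
    | of j => exact absurd ⟨j⟩ hβ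
    | inv_of j hj => exact inv_mem hj
    | mul x y hx hy => exact mul_mem hx hy

/-- A free group generated by two elements `a`, `c` satisfying a relation
`a ^ m * c ^ n = 1` with `m, n ≠ 0` is cyclic. -/
lemma aux_cyclic {G : Type*} [Group G] [IsFreeGroup G] (a c : G) (m n : ℤ)
    (hm : m ≠ 0) (hn : n ≠ 0) (hcl : Subgroup.closure {a, c} = ⊤)
    (hrel : a ^ m * c ^ n = 1) :
    ∃ z : G, ∀ x : G, x ∈ Subgroup.zpowers z := by
  have hsub : Subsingleton (IsFreeGroup.Generators G) := by
    constructor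
    intro s t
    by_contra hst
    -- the coordinate homomorphism at s and t
    set P : G →* Multiplicative (ℤ × ℤ) :=
      IsFreeGroup.lift (fun u => Multiplicative.ofAdd
        (((if u = s then 1 else 0 : ℤ), (if u = t then 1 else 0 : ℤ)))) with hP
    have hPs : P (IsFreeGroup.of s) = Multiplicative.ofAdd ((1, 0) : ℤ × ℤ) := by
      rw [hP, IsFreeGroup.lift_of]
      simp [hst, Ne.symm hst]
    have hPt : P (IsFreeGroup.of t) = Multiplicative.ofAdd ((0, 1) : ℤ × ℤ) := by
      rw [hP, IsFreeGroup.lift_of]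
      simp [hst, Ne.symm hst]
    have hpow : ∀ v : ℤ × ℤ, Multiplicative.ofAdd v =
        P (IsFreeGroup.of s) ^ v.1 * P (IsFreeGroup.of t) ^ v.2 := by
      intro v
      rw [hPs, hPt, ← ofAdd_zsmul, ← ofAdd_zsmul, ← ofAdd_add]
      congr 1
      simp [Prod.ext_iff]
    -- surjectivity gives closure {P a, P c} = ⊤
    have hsurj : Function.Surjective P := by
      intro x
      exact ⟨IsFreeGroup.of s ^ (Multiplicative.toAdd x).1 *
        IsFreeGroup.of t ^ (Multiplicative.toAdd x).2, by
          rw [map_mul, map_zpow, map_zpow, ← hpow]; simp⟩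
    have hcl2 : Subgroup.closure ({P a, P c} : Set (Multiplicative (ℤ × ℤ))) = ⊤ := by
      have : Subgroup.map P (Subgroup.closure {a, c}) = Subgroup.closure (P '' {a, c}) :=
        (MonoidHom.map_closure P _).symm ▸ rfl
      rw [hcl] at this
      rw [Set.image_pair] at this
      rw [← this, Subgroup.map_top_of_surjective P hsurj]
    -- the relation in the abelian group
    have hrel2 : P c ^ n = P a ^ (-m) := by
      have := congrArg P hrel
      rw [map_mul, map_zpow, map_zpow, map_one] at this
      rw [zpow_neg, eq_inv_iff_mul_eq_one, mul_comm]
      exact this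
    -- every element, raised to the power m*n, is a power of P a
    have key : ∀ x : Multiplicative (ℤ × ℤ), x ^ (m * n) ∈ Subgroup.zpowers (P a) := by
      intro x
      have hx : x ∈ Subgroup.closure ({P a, P c} : Set (Multiplicative (ℤ × ℤ))) := by
        rw [hcl2]; trivial
      refine Subgroup.closure_induction (p := fun y _ => y ^ (m * n) ∈ Subgroup.zpowers (P a))
        ?_ ?_ ?_ ?_ hx
      · rintro y (rfl | rfl)
        · exact ⟨m * n, rfl⟩
        · refine ⟨-m * m, ?_⟩
          rw [mul_comm m n, zpow_mul, hrel2, ← zpow_mul]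
      · simp [one_mem]
      · intro x y _ _ hx hy
        rw [mul_zpow]
        exact mul_mem hx hy
      · intro x _ hx
        rw [inv_zpow]
        exact inv_mem hx
    obtain ⟨k1, hk1⟩ := key (Multiplicative.ofAdd ((1, 0) : ℤ × ℤ))
    obtain ⟨k2, hk2⟩ := key (Multiplicative.ofAdd ((0, 1) : ℤ × ℤ))
    set w : ℤ × ℤ := Multiplicative.toAdd (P a) with hw
    have h1 : k1 • w = (m * n) • ((1, 0) : ℤ × ℤ) := by
      have := congrArg Multiplicative.toAdd hk1
      simpa [hw] using this
    have h2 : k2 • w = (m * n) • ((0, 1) : ℤ × ℤ) := by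
      have := congrArg Multiplicative.toAdd hk2
      simpa [hw] using this
    have h11 : k1 * w.1 = m * n := by
      have := congrArg Prod.fst h1; simpa [smul_eq_mul] using this
    have h12 : k1 * w.2 = 0 := by
      have := congrArg Prod.snd h1; simpa [smul_eq_mul] using this
    have h22 : k2 * w.2 = m * n := by
      have := congrArg Prod.snd h2; simpa [smul_eq_mul] using this
    have hmn : m * n ≠ 0 := mul_ne_zero hm hn
    have hk1' : k1 ≠ 0 := fun h => hmn (by rw [← h11, h, zero_mul])
    have hw2 : w.2 ≠ 0 := fun h => hmn (by rw [← h22, h, mul_zero])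
    exact (mul_ne_zero hk1' hw2) h12
  -- now G is free over a subsingleton type, hence cyclic
  let e := IsFreeGroup.toFreeGroup G
  obtain ⟨z0, hz0⟩ := freeGroup_subsingleton_cyclic (β := IsFreeGroup.Generators G)
  refine ⟨e.symm z0, fun x => ?_⟩
  obtain ⟨k, hk⟩ := hz0 (e x)
  exact ⟨k, by dsimp only at hk ⊢; rw [← map_zpow, hk, MulEquiv.symm_apply_apply]⟩

/-- A primitive element is not a proper power. -/
lemma prim_exp {α : Type*} {a w : FreeGroup α} {p : ℤ} (hpa : IsPrimitiveElt a)
    (h : a = w ^ p) : p = 1 ∨ p = -1 := by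
  obtain ⟨e, i, he⟩ := hpa
  set ψ : FreeGroup α →* Multiplicative ℤ :=
    (FreeGroup.lift (fun j => if j = i then Multiplicative.ofAdd (1 : ℤ) else 1)).comp
      e.symm.toMonoidHom with hψ
  have hψa : ψ a = Multiplicative.ofAdd (1 : ℤ) := by
    rw [hψ, MonoidHom.comp_apply, ← he]
    simp
  have := congrArg (fun x => Multiplicative.toAdd (ψ x)) h
  simp only [hψa, map_zpow, toAdd_zpow, toAdd_ofAdd] at this
  have hu : IsUnit p := IsUnit.of_mul_eq_one (a := p) (Multiplicative.toAdd (ψ w)) (by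
    rw [← smul_eq_mul, ← this])
  exact Int.isUnit_iff.mp hu

end Aux

/-- If `a` and `b` are primitive elements of a free group `F` and
`a ^ m * g * b ^ n * g⁻¹ = 1` for some nonzero integers `m`, `n` and some `g ∈ F`, then
`a` is conjugate to `b` or to `b⁻¹`. -/
theorem statement14 {α : Type*} (a b : FreeGroup α)
    (hpa : IsPrimitiveElt a) (hpb : IsPrimitiveElt b)
    (g : FreeGroup α) (m n : ℤ) (hm : m ≠ 0) (hn : n ≠ 0)
    (h : a ^ m * g * b ^ n * g⁻¹ = 1) :
    IsConj a b ∨ IsConj a b⁻¹ := by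
  set c : FreeGroup α := g * b * g⁻¹ with hc
  have hpc : IsPrimitiveElt c := by
    obtain ⟨e, j, he⟩ := hpb
    exact ⟨e.trans (MulAut.conj g), j, by
      simp [MulEquiv.trans_apply, he, MulAut.conj_apply, hc]⟩
  have hrel : a ^ m * c ^ n = 1 := by
    rw [hc, conj_zpow, ← h]
    group
  -- the subgroup generated by a and c
  set K := Subgroup.closure ({a, c} : Set (FreeGroup α)) with hK
  have haK : a ∈ K := Subgroup.subset_closure (Set.mem_insert _ _)
  have hcK : c ∈ K := Subgroup.subset_closure (Set.mem_insert_of_mem _ rfl)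
  set a' : K := ⟨a, haK⟩
  set c' : K := ⟨c, hcK⟩
  have hcl : Subgroup.closure ({a', c'} : Set K) = ⊤ := by
    rw [eq_top_iff, ← Subgroup.closure_closure_coe_preimage (k := ({a, c} : Set (FreeGroup α)))]
    apply Subgroup.closure_mono
    rintro ⟨x, hx⟩ (hx' | hx')
    · left; exact Subtype.ext hx'
    · right; exact Subtype.ext hx'
  have hrel' : a' ^ m * c' ^ n = 1 := by
    apply Subtype.ext
    push_cast
    exact hrel
  obtain ⟨z, hz⟩ := aux_cyclic a' c' m n hm hn hcl hrel'
  obtain ⟨p, hp⟩ := hz a'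
  obtain ⟨q, hq⟩ := hz c'
  have hpz : a = (z : FreeGroup α) ^ p := by
    have := congrArg (Subtype.val : K → FreeGroup α) hp
    push_cast at this
    exact this.symm
  have hqz : c = (z : FreeGroup α) ^ q := by
    have := congrArg (Subtype.val : K → FreeGroup α) hq
    push_cast at this
    exact this.symm
  have hp1 := prim_exp hpa hpz
  have hq1 := prim_exp hpc hqz
  have hac : a = c ∨ a = c⁻¹ := by
    rcases hp1 with rfl | rfl <;> rcases hq1 with rfl | rfl
    · left; rw [hpz, hqz]
    · right; rw [hpz, hqz]; group
    · right; rw [hpz, hqz]; group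
    · left; rw [hpz, hqz]
  rcases hac with hac | hac
  · left
    rw [isConj_iff]
    refine ⟨g⁻¹, ?_⟩
    rw [hac, hc]
    group
  · right
    rw [isConj_iff]
    refine ⟨g⁻¹, ?_⟩
    rw [hac, hc]
    group
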